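/- arXiv:2411.00434 — 4 statements merged into one kernel-verified Lean document; each statement's English description precedes it below -/
import Mathlib

section
/- The Fermi-Dirac function f(x) = 1/(e^{βx}+1), extended to complex z with |Im z| ≤ 2/β and |Re z| ≤ 2, is bounded in absolute value by 1/sin(π−2) < 1.1. -/
open Real

lemma sin_two_le_aux (t : ℝ) (ht0 : 0 ≤ t) (ht1 : t ≤ 2) (hc : Real.cos t < 0) :
    Real.sin (π - 2) ≤ Real.sin t := by
  have hpi : (2:ℝ) < π := by linarith [Real.pi_gt_three]
  have hpi4 : π < 4 := by linarith [Real.pi_lt_d2]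
  have htg : π/2 < t := by
    by_contra h
    push_neg at h
    exact absurd (Real.cos_nonneg_of_mem_Icc ⟨by linarith, h⟩) (not_le.mpr hc)
  rw [show Real.sin t = Real.sin (π - t) from (Real.sin_pi_sub t).symm]
  apply Real.strictMonoOn_sin.monotoneOn ⟨by linarith, by linarith⟩
    ⟨by linarith, by linarith⟩ (by linarith)

/-- The Fermi–Dirac function `f(z) = 1/(e^{βz}+1)`, extended to complex `z` with
`|Im z| ≤ 2/β` and `|Re z| ≤ 2`, is bounded in absolute value by `1/sin(π−2)`. -/
theorem fermi_dirac_complex_bound (β : ℝ) (hβ : 0 < β) (z : ℂ)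
    (him : β * |z.im| ≤ 2) (hre : |z.re| ≤ 2) :
    ‖1 / (Complex.exp (β * z) + 1)‖ ≤ 1 / Real.sin (π - 2) := by
  have hpi : (2:ℝ) < π := by linarith [Real.pi_gt_three]
  have hsin : 0 < Real.sin (π - 2) :=
    Real.sin_pos_of_pos_of_lt_pi (by linarith) (by linarith)
  set w : ℂ := (β : ℂ) * z with hw
  have hyim : w.im = β * z.im := by simp [hw]
  have hy2 : |w.im| ≤ 2 := by
    rw [hyim, abs_mul, abs_of_pos hβ]; exact him
  have key : Real.sin (π - 2) ≤ ‖Complex.exp w + 1‖ := by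
    rw [Complex.norm_def, Real.le_sqrt hsin.le (Complex.normSq_nonneg _)]
    have hnorm : Complex.normSq (Complex.exp w + 1) =
        (Real.exp w.re * Real.cos w.im + 1)^2 + (Real.exp w.re * Real.sin w.im)^2 := by
      simp [Complex.normSq_apply, Complex.exp_re, Complex.exp_im]
      ring
    rw [hnorm]
    set r := Real.exp w.re with hr
    have hrpos : 0 < r := Real.exp_pos _
    set y := w.im with hydef
    have hsin1 : Real.sin (π - 2) ≤ 1 := Real.sin_le_one _
    rcases le_or_gt 0 (Real.cos y) with hc | hc
    · nlinarith [sq_nonneg (r * Real.sin y), mul_nonneg hrpos.le hc]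
    · have habs : Real.cos |y| < 0 := by
        rcases abs_cases y with ⟨h1, _⟩ | ⟨h1, _⟩
        · rwa [h1]
        · rw [h1, Real.cos_neg]; exact hc
      have h0 : 0 ≤ |y| := abs_nonneg _
      have hst := sin_two_le_aux |y| h0 hy2 habs
      have hsq : Real.sin |y| ^ 2 = Real.sin y ^ 2 := by
        rcases abs_cases y with ⟨h1, _⟩ | ⟨h1, _⟩ <;> rw [h1] <;> simp [Real.sin_neg]
      have hsq2 : Real.sin (π - 2) ^ 2 ≤ Real.sin y ^ 2 := by
        rw [← hsq]; exact pow_le_pow_left₀ hsin.le hst 2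
      nlinarith [Real.sin_sq_add_cos_sq y, sq_nonneg (r + Real.cos y), sq_nonneg r]
  rw [norm_div, norm_one]
  exact one_div_le_one_div_of_le hsin key
end

section
/- The Chebyshev coefficients of the simple-pole function x ↦ η/((ω+iη) − x) are a_k = πη / (√((ω+iη)²−1) · (ω+iη ± √((ω+iη)²−1))^k), where the sign is chosen so the base has modulus > 1. -/
open Real intervalIntegral

namespace ChebPoleAux
open MeasureTheory Set Complex

lemma intervalIntegrable_inv_sqrt :
    IntervalIntegrable (fun x : ℝ => (Real.sqrt (1 - x ^ 2))⁻¹) volume (-1) 1 := by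
  apply intervalIntegral.intervalIntegrable_deriv_of_nonneg (g := Real.arcsin)
  · exact Real.continuous_arcsin.continuousOn
  · intro x hx
    rw [min_eq_left (by norm_num : (-1:ℝ) ≤ 1), max_eq_right (by norm_num : (-1:ℝ) ≤ 1)] at hx
    simpa [one_div] using Real.hasDerivAt_arcsin (ne_of_gt hx.1) (ne_of_lt hx.2)
  · intro x _; positivity

lemma II_smul {E : Type*} [NormedAddCommGroup E] [NormedSpace ℝ E] {f : ℝ → E} (hf : Continuous f) :
    IntervalIntegrable (fun x => (Real.sqrt (1 - x ^ 2))⁻¹ • f x) volume (-1) 1 := by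
  obtain ⟨C, hC⟩ := (isCompact_Icc (a := (-1:ℝ)) (b := 1)).exists_bound_of_continuousOn
    hf.continuousOn
  refine (intervalIntegrable_inv_sqrt.const_mul C).mono_fun ?_ ?_
  · exact (((measurable_const.sub (measurable_id.pow_const 2)).sqrt.inv).aestronglyMeasurable.smul hf.aestronglyMeasurable)
  · rw [Filter.EventuallyLE, ae_restrict_iff' measurableSet_uIoc]
    refine Filter.Eventually.of_forall fun x hx => ?_
    have hx' : x ∈ Icc (-1:ℝ) 1 := by
      rw [uIoc_of_le (by norm_num : (-1:ℝ) ≤ 1)] at hx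
      exact ⟨le_of_lt hx.1, hx.2⟩
    have h1 : ‖(Real.sqrt (1 - x ^ 2))⁻¹ • f x‖ = (Real.sqrt (1 - x ^ 2))⁻¹ * ‖f x‖ := by
      rw [norm_smul, Real.norm_eq_abs, _root_.abs_of_nonneg (by positivity)]
    have hC0 : 0 ≤ C := le_trans (norm_nonneg _) (hC 0 (by norm_num))
    rw [h1, Real.norm_eq_abs]
    calc (Real.sqrt (1 - x ^ 2))⁻¹ * ‖f x‖ ≤ (Real.sqrt (1 - x ^ 2))⁻¹ * C :=
          mul_le_mul_of_nonneg_left (hC x hx') (by positivity)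
      _ ≤ |C * (Real.sqrt (1 - x ^ 2))⁻¹| := by rw [mul_comm]; exact le_abs_self _

lemma ftc_sing {E : Type*} [NormedAddCommGroup E] [NormedSpace ℝ E] [CompleteSpace E]
    {F f : ℝ → E} (hcont : ContinuousOn F (Icc (-1) 1))
    (hderiv : ∀ x ∈ Ioo (-1:ℝ) 1, HasDerivAt F (f x) x)
    (hint : IntervalIntegrable f volume (-1) 1) :
    ∫ x in (-1:ℝ)..1, f x = F 1 - F (-1) :=
  intervalIntegral.integral_eq_sub_of_hasDeriv_right_of_le (by norm_num) hcont
    (fun x hx => (hderiv x hx).hasDerivWithinAt) hint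

lemma integral_inv_sqrt : ∫ x in (-1:ℝ)..1, (Real.sqrt (1 - x ^ 2))⁻¹ = π := by
  rw [ftc_sing (F := Real.arcsin) Real.continuous_arcsin.continuousOn
    (fun x hx => by simpa [one_div] using Real.hasDerivAt_arcsin (ne_of_gt hx.1) (ne_of_lt hx.2))
    intervalIntegrable_inv_sqrt]
  rw [Real.arcsin_one, Real.arcsin_neg_one]; ring

lemma deriv_sin_arccos {n : ℕ} (hn : n ≠ 0) {x : ℝ} (hx : x ∈ Ioo (-1:ℝ) 1) :
    HasDerivAt (fun y => -(1/(n:ℝ)) * Real.sin (n * Real.arccos y))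
      ((Polynomial.Chebyshev.T ℝ n).eval x * (Real.sqrt (1 - x ^ 2))⁻¹) x := by
  have ha : HasDerivAt Real.arccos (-(1 / Real.sqrt (1 - x ^ 2))) x :=
    Real.hasDerivAt_arccos (ne_of_gt hx.1) (ne_of_lt hx.2)
  have hm : HasDerivAt (fun y => (n:ℝ) * Real.arccos y) ((n:ℝ) * -(1 / Real.sqrt (1 - x ^ 2))) x :=
    ha.const_mul _
  have hs := (Real.hasDerivAt_sin ((n:ℝ) * Real.arccos x)).comp x hm
  have := hs.const_mul (-(1/(n:ℝ)))
  refine this.congr_deriv ?_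
  symm
  have hT : (Polynomial.Chebyshev.T ℝ n).eval x = Real.cos ((n:ℝ) * Real.arccos x) := by
    have := Polynomial.Chebyshev.T_real_cos (Real.arccos x) (n : ℤ)
    rw [Real.cos_arccos (le_of_lt hx.1) (le_of_lt hx.2)] at this
    rw [this]; push_cast; ring_nf
  rw [hT, one_div]
  field_simp

section
variable {w r : ℂ}

lemma hr0 (hr : 1 < ‖r‖) : r ≠ 0 := by
  intro h; rw [h] at hr; simp at hr; linarith

lemma slit (hr : 1 < ‖r‖) (z : ℂ) (hz : ‖z‖ ≤ 1) :
    1 - z / r ∈ Complex.slitPlane := by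
  rw [Complex.mem_slitPlane_iff]
  left
  have habs : ‖z / r‖ < 1 := by
    rw [norm_div, div_lt_one (by linarith)]; linarith
  have h1 : (z / r).re ≤ ‖z / r‖ := Complex.re_le_norm _
  simp only [Complex.sub_re, Complex.one_re]
  linarith

lemma one_sub_ne (hr : 1 < ‖r‖) (z : ℂ) (hz : ‖z‖ ≤ 1) :
    1 - z / r ≠ 0 := Complex.slitPlane_ne_zero (slit hr z hz)

lemma hrsub_ne (hr : 1 < ‖r‖) (z : ℂ) (hz : ‖z‖ ≤ 1) : r - z ≠ 0 := by
  intro h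
  have : r = z := sub_eq_zero.mp h
  rw [this] at hr; linarith

lemma hrw_ne (hr : 1 < ‖r‖) (h2w : 2 * w * r = r ^ 2 + 1) : r - w ≠ 0 := by
  have hr0' : r ≠ 0 := hr0 hr
  have hsq : r ^ 2 - 1 ≠ 0 := by
    intro h
    have h2 : r ^ 2 = 1 := by linear_combination h
    have habs : ‖r‖ ^ 2 = 1 := by rw [← norm_pow, h2, norm_one]
    nlinarith
  intro h
  have hw' : w = r := (sub_eq_zero.mp h).symm
  rw [hw'] at h2w
  apply hsq
  linear_combination h2w - 2 * (1:ℂ) * (by ring : r * r = r ^ 2)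

noncomputable def Fa (w r : ℂ) : ℝ → ℂ := fun θ =>
  (r - w)⁻¹ * (θ + Complex.I * Complex.log (1 - Complex.exp (θ * Complex.I) / r)
    - Complex.I * Complex.log (1 - Complex.exp (-(θ * Complex.I)) / r))

lemma Fa_deriv (hr : 1 < ‖r‖) (h2w : 2 * w * r = r ^ 2 + 1) (θ : ℝ) :
    HasDerivAt (Fa w r) ((w - (Real.cos θ : ℂ))⁻¹) θ := by
  have hr0' : r ≠ 0 := hr0 hr
  set z : ℂ := Complex.exp ((θ:ℂ) * Complex.I) with hzdef
  have hz1 : ‖z‖ = 1 := Complex.norm_exp_ofReal_mul_I θ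
  have hzinv : Complex.exp (-((θ:ℂ) * Complex.I)) = z⁻¹ := by rw [Complex.exp_neg]
  have hz0 : z ≠ 0 := Complex.exp_ne_zero _
  have hzinv1 : ‖z⁻¹‖ = 1 := by rw [norm_inv, hz1]; norm_num
  have he1 : HasDerivAt (fun t : ℝ => Complex.exp ((t:ℂ) * Complex.I)) (z * Complex.I) θ := by
    have := (((hasDerivAt_id ((θ:ℝ):ℂ)).mul_const Complex.I).cexp).comp_ofReal
    simpa using this
  have he2 : HasDerivAt (fun t : ℝ => Complex.exp (-((t:ℂ) * Complex.I))) (-(z⁻¹ * Complex.I)) θ := by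
    have h := ((((hasDerivAt_id ((θ:ℝ):ℂ)).mul_const Complex.I).neg).cexp).comp_ofReal
    simp only [id_eq, Pi.neg_apply] at h
    rw [hzinv] at h
    convert h using 1
    ring
  have hu : HasDerivAt (fun t : ℝ => 1 - Complex.exp ((t:ℂ) * Complex.I) / r)
      (-(z * Complex.I / r)) θ := (he1.div_const r).const_sub 1
  have hv : HasDerivAt (fun t : ℝ => 1 - Complex.exp (-((t:ℂ) * Complex.I)) / r)
      (-(-(z⁻¹ * Complex.I) / r)) θ := (he2.div_const r).const_sub 1
  have hlu := hu.clog_real (by rw [← hzdef]; exact slit hr z (le_of_eq hz1))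
  have hlv := hv.clog_real (by rw [hzinv]; exact slit hr z⁻¹ (le_of_eq hzinv1))
  have hofr : HasDerivAt (fun t : ℝ => ((t:ℝ):ℂ)) 1 θ := by
    simpa using (hasDerivAt_id θ).ofReal_comp
  have htot := (((hofr.add (hlu.const_mul Complex.I)).sub (hlv.const_mul Complex.I)).const_mul
    ((r - w)⁻¹))
  have h1 : 1 - z / r ≠ 0 := one_sub_ne hr z (le_of_eq hz1)
  have h2 : 1 - z⁻¹ / r ≠ 0 := one_sub_ne hr z⁻¹ (le_of_eq hzinv1)
  have h3 : r - w ≠ 0 := hrw_ne hr h2w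
  have hcos : ((Real.cos θ : ℝ) : ℂ) = (z + z⁻¹) / 2 := by
    rw [Complex.ofReal_cos]
    simp only [Complex.cos, hzdef, Complex.exp_neg, neg_mul]
  have hrz' : r - z ≠ 0 := hrsub_ne hr z (le_of_eq hz1)
  have hrzi' : r - z⁻¹ ≠ 0 := hrsub_ne hr z⁻¹ (le_of_eq hzinv1)
  have hfac : w - (z + z⁻¹) / 2 = (r - z) * (r - z⁻¹) / (2 * r) := by
    field_simp
    linear_combination z * h2w
  have hzr1 : z * r - 1 ≠ 0 := by
    intro h
    apply hrzi'
    have : z * (r - z⁻¹) = 0 := by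
      field_simp
      linear_combination h
    rcases mul_eq_zero.mp this with h' | h'
    · exact absurd h' hz0
    · exact absurd h' (by assumption)
  have hX : z + z * r ^ 2 + (-(z ^ 2 * r) - r) ≠ 0 := by
    intro h
    apply mul_ne_zero hrz' hzr1
    linear_combination h
  refine htot.congr_deriv ?_
  symm
  rw [hzinv, ← hzdef, hcos, hfac, inv_div, inv_mul_eq_div,
    div_eq_div_iff (mul_ne_zero hrz' hrzi') h3]
  field_simp [h1, h2, hz0, hr0']
  have hrz1 : r * z - 1 ≠ 0 := by rw [mul_comm]; exact hzr1
  rw [Complex.I_sq, mul_sub (r * z - 1), mul_div_cancel₀ _ hrz1]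
  linear_combination (-z) * h2w


lemma integral_T {n : ℕ} (hn : n ≠ 0) :
    ∫ x in (-1:ℝ)..1, (Real.sqrt (1 - x ^ 2))⁻¹ • (Polynomial.Chebyshev.T ℝ n).eval x = 0 := by
  rw [ftc_sing (F := fun y => -(1/(n:ℝ)) * Real.sin (n * Real.arccos y))
    ((continuous_const.mul
      (Real.continuous_sin.comp (continuous_const.mul Real.continuous_arccos))).continuousOn)
    (fun x hx => by
      have := deriv_sin_arccos hn hx
      simpa [smul_eq_mul, mul_comm] using this)
    (II_smul (Polynomial.continuous _))]
  simp [Real.arccos_one, Real.arccos_neg_one, Real.sin_nat_mul_pi]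

lemma Fa_zero : Fa w r 0 = 0 := by
  simp [Fa]

lemma Fa_pi : Fa w r π = (r - w)⁻¹ * π := by
  have h1 : Complex.exp ((π:ℂ) * Complex.I) = -1 := Complex.exp_pi_mul_I
  have h2 : Complex.exp (-((π:ℂ) * Complex.I)) = -1 := by
    rw [Complex.exp_neg, h1]; norm_num
  simp [Fa, h1, h2]

lemma integral_base (hr : 1 < ‖r‖) (h2w : 2 * w * r = r ^ 2 + 1)
    (hwreal : ∀ x : ℝ, w - (x:ℂ) ≠ 0) :
    ∫ x in (-1:ℝ)..1, (Real.sqrt (1 - x ^ 2))⁻¹ • (w - (x:ℂ))⁻¹ = π * (r - w)⁻¹ := by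
  have hFc : Continuous (Fa w r) := by
    rw [continuous_iff_continuousAt]
    exact fun θ => (Fa_deriv hr h2w θ).continuousAt
  rw [ftc_sing (F := fun x : ℝ => -Fa w r (Real.arccos x))
    ((hFc.comp Real.continuous_arccos).neg.continuousOn)
    (fun x hx => by
      have ha : HasDerivAt Real.arccos (-(1 / Real.sqrt (1 - x ^ 2))) x :=
        Real.hasDerivAt_arccos (ne_of_gt hx.1) (ne_of_lt hx.2)
      have hF := Fa_deriv hr h2w (Real.arccos x)
      have h2 := (hF.scomp x ha).neg
      rw [Real.cos_arccos (le_of_lt hx.1) (le_of_lt hx.2)] at h2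
      convert h2 using 1
      · rfl
      simp [smul_eq_mul])
    (II_smul (f := fun x : ℝ => (w - (x:ℂ))⁻¹) ((continuous_const.sub Complex.continuous_ofReal).inv₀ hwreal))]
  rw [Real.arccos_one, Real.arccos_neg_one, Fa_zero, Fa_pi]
  ring

end

end ChebPoleAux

/-- Chebyshev coefficients of the simple-pole function `x ↦ η/((ω+iη) − x)`:
`a_k = ∫_{−1}^1 T_k(x)/√(1−x²) · η/(w−x) dx = πη/(√(w²−1)·r^k)`, where `w = ω+iη`,
`r = w + √(w²−1)` is the root of `z²−2wz+1=0` with `|r| > 1`, and the branch of the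
square root consistent with `r` is `√(w²−1) = r − w`. -/
theorem chebyshev_coeff_simple_pole (ω η : ℝ) (hη : 0 < η) (k : ℕ) (w r : ℂ)
    (hw : w = (ω : ℂ) + η * Complex.I)
    (hroot : r ^ 2 - 2 * w * r + 1 = 0) (hr : 1 < ‖r‖) :
    (∫ x in (-1 : ℝ)..1,
        (((Polynomial.Chebyshev.T ℝ k).eval x / Real.sqrt (1 - x ^ 2) : ℝ) : ℂ) *
          ((η : ℂ) / (w - (x : ℂ)))) =
      (π : ℂ) * η / ((r - w) * r ^ k) := by
  have h2w : 2 * w * r = r ^ 2 + 1 := by linear_combination -hroot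
  have hr0' : r ≠ 0 := ChebPoleAux.hr0 hr
  have hrw : r - w ≠ 0 := ChebPoleAux.hrw_ne hr h2w
  have hwreal : ∀ x : ℝ, w - (x : ℂ) ≠ 0 := by
    intro x h
    have him : (w - (x : ℂ)).im = 0 := by rw [h]; rfl
    rw [hw] at him
    simp [Complex.sub_im, Complex.add_im] at him
    linarith
  set f : ℕ → ℝ → ℂ := fun m x => (Real.sqrt (1 - x ^ 2))⁻¹ •
      ((((Polynomial.Chebyshev.T ℝ m).eval x : ℝ) : ℂ) * ((η : ℂ) * (w - (x : ℂ))⁻¹)) with hf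
  have hcontm : ∀ m : ℕ, Continuous fun x : ℝ =>
      (((Polynomial.Chebyshev.T ℝ m).eval x : ℝ) : ℂ) * ((η : ℂ) * (w - (x : ℂ))⁻¹) := fun m =>
    (Complex.continuous_ofReal.comp (Polynomial.continuous _)).mul
      (continuous_const.mul ((continuous_const.sub Complex.continuous_ofReal).inv₀ hwreal))
  have hint : ∀ m : ℕ, IntervalIntegrable (f m) MeasureTheory.volume (-1) 1 := fun m =>
    ChebPoleAux.II_smul (hcontm m)
  have hform : (∫ x in (-1 : ℝ)..1,
        (((Polynomial.Chebyshev.T ℝ k).eval x / Real.sqrt (1 - x ^ 2) : ℝ) : ℂ) *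
          ((η : ℂ) / (w - (x : ℂ)))) = ∫ x in (-1 : ℝ)..1, f k x := by
    apply intervalIntegral.integral_congr
    intro x _
    simp only [hf]
    rw [Complex.real_smul]
    push_cast
    rw [div_eq_mul_inv, div_eq_mul_inv]
    ring
  rw [hform]
  clear hform
  induction k using Nat.twoStepInduction with
  | zero =>
      have hpt : ∀ x : ℝ, f 0 x = (η : ℂ) *
          ((Real.sqrt (1 - x ^ 2))⁻¹ • (w - (x : ℂ))⁻¹) := fun x => by
        simp only [hf]
        rw [Complex.real_smul, Complex.real_smul]
        simp [Polynomial.Chebyshev.T_zero]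
        ring
      rw [intervalIntegral.integral_congr (fun x _ => hpt x),
        intervalIntegral.integral_const_mul, ChebPoleAux.integral_base hr h2w hwreal]
      rw [pow_zero]
      field_simp
  | one =>
      have hpt : ∀ x : ℝ, f 1 x =
          (w * η) * ((Real.sqrt (1 - x ^ 2))⁻¹ • (w - (x : ℂ))⁻¹)
          - (η : ℂ) * ((Real.sqrt (1 - x ^ 2))⁻¹ • (1 : ℂ)) := fun x => by
        simp only [hf]
        rw [Complex.real_smul, Complex.real_smul, Complex.real_smul]
        simp only [Nat.cast_one, Polynomial.Chebyshev.T_one, Polynomial.eval_X]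
        by_cases hs : Real.sqrt (1 - x ^ 2) = 0
        · simp [hs]
        · have hsC : ((Real.sqrt (1 - x ^ 2) : ℝ) : ℂ) ≠ 0 := by exact_mod_cast hs
          field_simp [hwreal x, hsC]
          ring
      rw [intervalIntegral.integral_congr (fun x _ => hpt x),
        intervalIntegral.integral_sub
          ((ChebPoleAux.II_smul (f := fun x : ℝ => (w - (x:ℂ))⁻¹) ((continuous_const.sub
            Complex.continuous_ofReal).inv₀ hwreal)).const_mul _)
          ((ChebPoleAux.II_smul continuous_const).const_mul _),
        intervalIntegral.integral_const_mul, intervalIntegral.integral_const_mul,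
        ChebPoleAux.integral_base hr h2w hwreal]
      have hone : (∫ x in (-1:ℝ)..1, (Real.sqrt (1 - x ^ 2))⁻¹ • (1 : ℂ)) = (π : ℂ) := by
        have heq : (fun x : ℝ => (Real.sqrt (1 - x ^ 2))⁻¹ • (1 : ℂ))
            = fun x : ℝ => (((Real.sqrt (1 - x ^ 2))⁻¹ : ℝ) : ℂ) := by
          funext x; rw [Complex.real_smul, mul_one]
        rw [heq, intervalIntegral.integral_ofReal, ChebPoleAux.integral_inv_sqrt]
      rw [hone, pow_one]
      field_simp
      linear_combination (η : ℂ) * h2w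
  | more k ih1 ih2 =>
      have hT2 : ∀ x : ℝ, (Polynomial.Chebyshev.T ℝ ((k + 2 : ℕ) : ℤ)).eval x =
          2 * x * (Polynomial.Chebyshev.T ℝ ((k + 1 : ℕ) : ℤ)).eval x
            - (Polynomial.Chebyshev.T ℝ ((k : ℕ) : ℤ)).eval x := by
        intro x
        have hcast : ((k + 2 : ℕ) : ℤ) = (k : ℤ) + 2 := by push_cast; ring
        have hcast1 : ((k + 1 : ℕ) : ℤ) = (k : ℤ) + 1 := by push_cast; ring
        rw [hcast, hcast1, Polynomial.Chebyshev.T_add_two]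
        simp
      have hpt : ∀ x : ℝ, f (k + 2) x = 2 * w * f (k + 1) x - f k x
          - (2 * (η : ℂ)) * ((Real.sqrt (1 - x ^ 2))⁻¹ •
              (((Polynomial.Chebyshev.T ℝ ((k + 1 : ℕ) : ℤ)).eval x : ℝ) : ℂ)) := fun x => by
        simp only [hf]
        rw [Complex.real_smul, Complex.real_smul, Complex.real_smul, Complex.real_smul, hT2 x]
        push_cast
        by_cases hs : Real.sqrt (1 - x ^ 2) = 0
        · simp [hs]
        · have hsC : ((Real.sqrt (1 - x ^ 2) : ℝ) : ℂ) ≠ 0 := by exact_mod_cast hs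
          field_simp [hwreal x, hsC]
          ring
      have hlast : IntervalIntegrable (fun x : ℝ => (2 * (η : ℂ)) *
          ((Real.sqrt (1 - x ^ 2))⁻¹ •
            (((Polynomial.Chebyshev.T ℝ ((k + 1 : ℕ) : ℤ)).eval x : ℝ) : ℂ)))
          MeasureTheory.volume (-1) 1 :=
        (ChebPoleAux.II_smul
          (Complex.continuous_ofReal.comp (Polynomial.continuous _))).const_mul _
      rw [intervalIntegral.integral_congr (fun x _ => hpt x),
        intervalIntegral.integral_sub (((hint (k + 1)).const_mul _).sub (hint k)) hlast,
        intervalIntegral.integral_sub ((hint (k + 1)).const_mul _) (hint k),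
        intervalIntegral.integral_const_mul, intervalIntegral.integral_const_mul,
        ih1, ih2]
      have hzero : (∫ x in (-1:ℝ)..1, (Real.sqrt (1 - x ^ 2))⁻¹ •
          (((Polynomial.Chebyshev.T ℝ ((k + 1 : ℕ) : ℤ)).eval x : ℝ) : ℂ)) = 0 := by
        have heq : (fun x : ℝ => (Real.sqrt (1 - x ^ 2))⁻¹ •
            (((Polynomial.Chebyshev.T ℝ ((k + 1 : ℕ) : ℤ)).eval x : ℝ) : ℂ))
            = fun x : ℝ => (((Real.sqrt (1 - x ^ 2))⁻¹ •
                (Polynomial.Chebyshev.T ℝ ((k + 1 : ℕ) : ℤ)).eval x : ℝ) : ℂ) := by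
          funext x; rw [Complex.real_smul, smul_eq_mul]; push_cast; ring
        rw [heq, intervalIntegral.integral_ofReal,
          ChebPoleAux.integral_T (Nat.succ_ne_zero k), Complex.ofReal_zero]
      rw [hzero, mul_zero, sub_zero]
      have hrk : (r : ℂ) ^ k ≠ 0 := pow_ne_zero _ hr0'
      rw [pow_succ, pow_succ, pow_succ]
      field_simp [hrw, hr0', hrk]
      linear_combination (η : ℂ) * h2w
end

section
/- For ω ∈ ℝ and η > 0, the root r = ω + iη + √((ω+iη)²−1) of z² − 2(ω+iη)z + 1 = 0 with larger modulus satisfies |r| ≥ 1 + η. -/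
/-- For `ω ∈ ℝ`, `η > 0`, `w = ω + iη`, the root `r` of `z² − 2wz + 1 = 0` with
modulus at least `1` satisfies `|r| ≥ 1 + η`. -/
theorem pole_root_modulus_lower_bound (ω η : ℝ) (hη : 0 < η) (r : ℂ)
    (hroot : r ^ 2 - 2 * (ω + η * Complex.I) * r + 1 = 0)
    (hr : 1 ≤ ‖r‖) :
    1 + η ≤ ‖r‖ := by
  set a := r.re with ha
  set b := r.im with hb
  set s := ‖r‖ with hs
  have hs2 : s ^ 2 = a ^ 2 + b ^ 2 := by
    rw [hs, Complex.sq_norm, Complex.normSq_apply]; ring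
  have hbs : b ≤ s := Complex.im_le_norm r
  have him := congrArg Complex.im hroot
  have hre := congrArg Complex.re hroot
  simp [Complex.ext_iff, pow_two, Complex.mul_im, Complex.mul_re,
    Complex.add_im, Complex.add_re, Complex.sub_im, Complex.sub_re] at him hre
  have key : b * (s ^ 2 - 1) = 2 * η * s ^ 2 := by
    rw [hs2]
    linear_combination a * him - b * hre
  nlinarith [key, hbs, hr, hη, sq_nonneg (s - 1)]
end

section
/- Gap bound near the origin for clock-Hamiltonian eigenvalues: for M = 2T+1 with T even, cos(π(T−1)/M) − cos(πT/M) ≥ π/(2M). -/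
open Real in
/-- Gap bound near the origin for clock-Hamiltonian eigenvalues: for `M = 2T+1` with
`T ≥ 2` even, `cos(π(T−1)/M) − cos(πT/M) ≥ π/(2M)`. -/
theorem clock_eigenvalue_gap (T : ℕ) (hT : 2 ≤ T) (hTeven : Even T) :
    Real.cos (π * (T - 1) / (2 * T + 1)) - Real.cos (π * T / (2 * T + 1)) ≥
      π / (2 * (2 * T + 1)) := by
  have hT2 : (2:ℝ) ≤ (T:ℝ) := by exact_mod_cast hT
  have hpi : (0:ℝ) < π := Real.pi_pos
  have hM : (0:ℝ) < 2 * (T:ℝ) + 1 := by linarith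
  set M : ℝ := 2 * (T:ℝ) + 1 with hMdef
  set x : ℝ := π * ((T:ℝ) - 1) / M
  set y : ℝ := π * (T:ℝ) / M
  -- cos x - cos y = 2 sin((x+y)/2) sin((y-x)/2)
  have key : Real.cos x - Real.cos y
      = 2 * Real.sin ((x + y) / 2) * Real.sin ((y - x) / 2) := by
    rw [Real.cos_sub_cos, show (x - y)/2 = -((y-x)/2) by ring, Real.sin_neg]
    ring
  have hs : (y - x) / 2 = π / (2 * M) := by
    field_simp [x, y]
    simp only [x, y]; rw [← sub_div, div_mul_cancel₀ _ hM.ne']; ring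
  have hm : (x + y) / 2 = π * (2 * (T:ℝ) - 1) / (2 * M) := by
    field_simp [x, y]
    simp only [x, y]; rw [← add_div, div_mul_cancel₀ _ hM.ne']; ring
  -- bound sin((y-x)/2) ≥ 1/M via Jordan
  have hsin_s : Real.sin ((y - x) / 2) ≥ 1 / M := by
    rw [hs]
    have h1 : (0:ℝ) ≤ π / (2 * M) := by positivity
    have h2 : π / (2 * M) ≤ π / 2 := by
      apply div_le_div_of_nonneg_left hpi.le (by norm_num) (by linarith)
    have := Real.mul_le_sin h1 h2
    calc (1:ℝ) / M = 2 / π * (π / (2 * M)) := by field_simp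
      _ ≤ Real.sin (π / (2 * M)) := this
  -- bound sin((x+y)/2) ≥ π/4
  have hmid : Real.sin ((x + y) / 2) ≥ π / 4 := by
    rw [hm]
    have h310 : Real.sin (3 * π / 10) = Real.cos (π / 5) := by
      rw [← Real.cos_pi_div_two_sub]
      congr 1
      ring
    have hcos5 : Real.cos (π / 5) = (1 + Real.sqrt 5) / 4 := Real.cos_pi_div_five
    have hsqrt : (2.2:ℝ) ≤ Real.sqrt 5 := by
      rw [show (2.2:ℝ) = Real.sqrt (2.2^2) by rw [Real.sqrt_sq]; norm_num]
      apply Real.sqrt_le_sqrt; norm_num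
    have hpi315 : π < 3.15 := by
      have := Real.pi_lt_d2
      linarith
    have hlow : π / 4 ≤ Real.sin (3 * π / 10) := by
      rw [h310, hcos5]
      nlinarith
    have hmono : Real.sin (3 * π / 10) ≤ Real.sin (π * (2 * (T:ℝ) - 1) / (2 * M)) := by
      apply Real.sin_le_sin_of_le_of_le_pi_div_two
      · linarith [hpi.le]
      · rw [div_le_div_iff₀ (by linarith) (by linarith)]
        nlinarith [hM, hT2, hpi]
      · rw [div_le_div_iff₀ (by norm_num) (by linarith)]
        nlinarith [hM, hT2, hpi]
    linarith
  have hsin_s' : (0:ℝ) < Real.sin ((y - x) / 2) := lt_of_lt_of_le (by positivity) hsin_s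
  have hmid' : (0:ℝ) < Real.sin ((x + y) / 2) := lt_of_lt_of_le (by positivity) hmid
  have : Real.cos x - Real.cos y ≥ 2 * (π / 4) * (1 / M) := by
    rw [key]
    apply mul_le_mul (by nlinarith) hsin_s (by positivity) (by positivity)
  calc π / (2 * M) = 2 * (π / 4) * (1 / M) := by field_simp; ring
    _ ≤ Real.cos x - Real.cos y := this
end
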